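/- Let G be a group with elements a, b satisfying axioms (I)-(IV) ((I) C(a) ∩ C(b) = 1; (II) x²y²z²=1 implies pairwise commuting; (III) unique square roots; (IV) [x²,a]=1 implies [x,a]=1). Define E(s,t) = s²·a·s²·a⁻¹·(t·b·t·b⁻¹)⁻². Then for any s₁, s₂, s₃ ∈ G: s₁ = 1 ∧ s₂ = 1 ∧ s₃ = 1 if and only if E(E(s₁, s₂), s₃) = 1. More generally, any finite conjunction of equations over G is equivalent to a single equation obtained by iterating E. -/
import Mathlib


/-- The Malcev-type conjunction-encoding word: `E a b s t = 1` iff `s = 1 ∧ t = 1`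
(under axioms (I)-(IV)). -/
def malcevE {G : Type*} [Group G] (a b s t : G) : G :=
  s ^ 2 * a * s ^ 2 * a⁻¹ * ((t * b * t * b⁻¹) ^ 2)⁻¹

lemma malcevE_eq_one_iff {G : Type*} [Group G] (a b : G)
    (hI : ∀ x : G, Commute x a → Commute x b → x = 1)
    (hII : ∀ x y z : G, x ^ 2 * y ^ 2 * z ^ 2 = 1 →
      Commute x y ∧ Commute x z ∧ Commute y z)
    (hIII : ∀ x y : G, x ^ 2 = y ^ 2 → x = y)
    (hIV : ∀ x : G, Commute (x ^ 2) a → Commute x a)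
    (s t : G) : malcevE a b s t = 1 ↔ s = 1 ∧ t = 1 := by
  constructor
  · intro h
    unfold malcevE at h
    set w := t * b * t * b⁻¹ with hw
    clear_value w
    have h1 : s ^ 2 * a * s ^ 2 * a⁻¹ = w ^ 2 := by
      rw [mul_inv_eq_one] at h; exact h
    have h2 : (w⁻¹) ^ 2 * (s ^ 2 * a) ^ 2 * (a⁻¹) ^ 2 = 1 := by
      have e : (w⁻¹) ^ 2 * (s ^ 2 * a) ^ 2 * (a⁻¹) ^ 2
          = (w⁻¹) ^ 2 * (s ^ 2 * a * s ^ 2 * a⁻¹) := by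
        simp [pow_two, mul_assoc]
      rw [e, h1]; simp [pow_two, mul_assoc]
    obtain ⟨_, _, c23⟩ := hII _ _ _ h2
    have c23' : Commute (s ^ 2 * a) a := by simpa using c23.inv_right
    have hs2a : Commute (s ^ 2) a := by
      have h' : s ^ 2 * a * a = a * (s ^ 2 * a) := c23'
      rw [← mul_assoc] at h'
      exact mul_right_cancel h'
    have hsa : Commute s a := hIV s hs2a
    have hws : w = s ^ 2 := by
      apply hIII
      have hc : a * s ^ 2 = s ^ 2 * a := hs2a.symm
      calc w ^ 2 = s ^ 2 * a * s ^ 2 * a⁻¹ := h1.symm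
        _ = s ^ 2 * (a * s ^ 2) * a⁻¹ := by rw [mul_assoc (s ^ 2) a (s ^ 2)]
        _ = s ^ 2 * (s ^ 2 * a) * a⁻¹ := by rw [hc]
        _ = (s ^ 2) ^ 2 := by simp [pow_two, mul_assoc]
    have h4 : (s⁻¹) ^ 2 * (t * b) ^ 2 * (b⁻¹) ^ 2 = 1 := by
      have e : (t * b) ^ 2 = w * b ^ 2 := by rw [hw]; simp [pow_two, mul_assoc]
      rw [e, hws]; simp [pow_two, mul_assoc]
    obtain ⟨_, d13, d23⟩ := hII _ _ _ h4
    have hsb : Commute s b := by simpa using d13.inv_inv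
    have htb : Commute t b := by
      have d23' : Commute (t * b) b := by simpa using d23.inv_right
      have h'' : t * b * b = b * (t * b) := d23'
      rw [← mul_assoc] at h''
      exact mul_right_cancel h''
    have hs1 : s = 1 := hI s hsa hsb
    have ht1 : t = 1 := by
      apply hIII t 1
      rw [one_pow]
      have hw1 : w = 1 := by rw [hws, hs1]; simp
      have e2 : t * b * t * b⁻¹ = t ^ 2 := by
        have hc : b * t = t * b := htb.symm
        calc t * b * t * b⁻¹ = t * (b * t) * b⁻¹ := by rw [mul_assoc t b t]
          _ = t * (t * b) * b⁻¹ := by rw [hc]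
          _ = t ^ 2 := by simp [pow_two, mul_assoc]
      rw [← e2, ← hw, hw1]
    exact ⟨hs1, ht1⟩
  · rintro ⟨rfl, rfl⟩
    simp [malcevE]

lemma foldl_malcevE_eq_one_iff {G : Type*} [Group G] (a b : G)
    (hI : ∀ x : G, Commute x a → Commute x b → x = 1)
    (hII : ∀ x y z : G, x ^ 2 * y ^ 2 * z ^ 2 = 1 →
      Commute x y ∧ Commute x z ∧ Commute y z)
    (hIII : ∀ x y : G, x ^ 2 = y ^ 2 → x = y)
    (hIV : ∀ x : G, Commute (x ^ 2) a → Commute x a) :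
    ∀ (l : List G) (acc : G),
      l.foldl (malcevE a b) acc = 1 ↔ acc = 1 ∧ ∀ s ∈ l, s = 1
  | [], acc => by simp
  | x :: xs, acc => by
    rw [List.foldl_cons, foldl_malcevE_eq_one_iff a b hI hII hIII hIV xs,
      malcevE_eq_one_iff a b hI hII hIII hIV]
    simp only [List.forall_mem_cons]
    tauto

theorem stmt_17 (G : Type*) [Group G] (a b : G)
    (hI : ∀ x : G, Commute x a → Commute x b → x = 1)
    (hII : ∀ x y z : G, x ^ 2 * y ^ 2 * z ^ 2 = 1 →
      Commute x y ∧ Commute x z ∧ Commute y z)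
    (hIII : ∀ x y : G, x ^ 2 = y ^ 2 → x = y)
    (hIV : ∀ x : G, Commute (x ^ 2) a → Commute x a) :
    (∀ s₁ s₂ s₃ : G, (s₁ = 1 ∧ s₂ = 1 ∧ s₃ = 1) ↔
      malcevE a b (malcevE a b s₁ s₂) s₃ = 1) ∧
    (∀ l : List G, (∀ s ∈ l, s = 1) ↔ l.foldl (malcevE a b) 1 = 1) := by
  constructor
  · intro s₁ s₂ s₃
    rw [malcevE_eq_one_iff a b hI hII hIII hIV,
      malcevE_eq_one_iff a b hI hII hIII hIV]
    tauto
  · intro l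
    rw [foldl_malcevE_eq_one_iff a b hI hII hIII hIV]
    simp
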